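/- arXiv:1406.1008 — 9 statements merged into one kernel-verified Lean document; each statement's English description precedes it below -/
import Mathlib

section
/- Let P be an n×n nonnegative real symmetric matrix with no all-zero rows, and let x be a vector in R^n with all entries positive. Define the diagonal matrix D with D_ii = (Px)_i / x_i. Then the matrix D + P is positive semi-definite. -/
open Matrix Finset

theorem stmt0 (n : ℕ) (P : Matrix (Fin n) (Fin n) ℝ)
    (hsymm : P.IsSymm) (hnonneg : ∀ i j, 0 ≤ P i j)
    (hrows : ∀ i, ∃ j, 0 < P i j)
    (x : Fin n → ℝ) (hx : ∀ i, 0 < x i) :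
    (Matrix.diagonal (fun i => P.mulVec x i / x i) + P).PosSemidef := by
  have hP : ∀ i j, P j i = P i j := fun i j => by
    conv_lhs => rw [← hsymm]
    rfl
  rw [Matrix.posSemidef_iff_dotProduct_mulVec]
  constructor
  · refine (Matrix.isHermitian_diagonal _).add ?_
    ext i j
    simp [Matrix.conjTranspose_apply, hP i j]
  · intro y
    have hx' : ∀ i, x i ≠ 0 := fun i => (hx i).ne'
    set f : Fin n → Fin n → ℝ :=
      fun i j => P i j * x j / x i * y i ^ 2 + P i j * y i * y j with hf
    have expand : star y ⬝ᵥ (Matrix.diagonal (fun i => P.mulVec x i / x i) + P).mulVec y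
        = ∑ i, ∑ j, f i j := by
      rw [Matrix.add_mulVec, dotProduct_add]
      have h1 : star y ⬝ᵥ (Matrix.diagonal (fun i => P.mulVec x i / x i)).mulVec y
          = ∑ i, ∑ j, P i j * x j / x i * y i ^ 2 := by
        simp only [star_trivial, dotProduct, Matrix.mulVec_diagonal]
        refine Finset.sum_congr rfl fun i _ => ?_
        simp only [Matrix.mulVec, dotProduct]
        rw [Finset.sum_div, Finset.sum_mul, Finset.mul_sum]
        exact Finset.sum_congr rfl fun j _ => by ring
      have h2 : star y ⬝ᵥ P.mulVec y = ∑ i, ∑ j, P i j * y i * y j := by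
        simp only [star_trivial, dotProduct, Matrix.mulVec, dotProduct, Finset.mul_sum]
        exact Finset.sum_congr rfl fun i _ => Finset.sum_congr rfl fun j _ => by ring
      rw [h1, h2, ← Finset.sum_add_distrib]
      exact Finset.sum_congr rfl fun i _ => by rw [← Finset.sum_add_distrib]
    have key : ∀ i j, f i j + f j i = P i j * (x j * y i + x i * y j) ^ 2 / (x i * x j) := by
      intro i j
      have hi := hx' i
      have hj := hx' j
      simp only [hf, hP i j]
      field_simp
      ring
    have hsum : (∑ i, ∑ j, f i j) + (∑ i, ∑ j, f i j) = ∑ i, ∑ j, (f i j + f j i) := by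
      nth_rewrite 2 [Finset.sum_comm]
      rw [← Finset.sum_add_distrib]
      exact Finset.sum_congr rfl fun i _ => by rw [← Finset.sum_add_distrib]
    have hnn : 0 ≤ ∑ i, ∑ j, (f i j + f j i) := by
      refine Finset.sum_nonneg fun i _ => Finset.sum_nonneg fun j _ => ?_
      rw [key i j]
      have := hnonneg i j
      have := hx i
      have := hx j
      positivity
    rw [expand]
    linarith
end

section
/- Let P be an n×n nonnegative real symmetric matrix with no all-zero rows, and let x be a vector in R^n with all entries positive. Define the diagonal matrix D with D_ii = (Px)_i / x_i. Then the matrix D − P is positive semi-definite. -/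
open Matrix Finset

theorem stmt1 (n : ℕ) (P : Matrix (Fin n) (Fin n) ℝ)
    (hsymm : P.IsSymm) (hnonneg : ∀ i j, 0 ≤ P i j)
    (hrows : ∀ i, ∃ j, 0 < P i j)
    (x : Fin n → ℝ) (hx : ∀ i, 0 < x i) :
    (Matrix.diagonal (fun i => P.mulVec x i / x i) - P).PosSemidef := by
  have hPsymm : ∀ i j, P i j = P j i := by
    intro i j
    have := congrFun (congrFun hsymm j) i
    simpa [Matrix.transpose_apply] using this
  have hPherm : P.IsHermitian := by
    ext i j
    simpa [Matrix.conjTranspose_apply] using (hPsymm j i)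
  refine Matrix.PosSemidef.of_dotProduct_mulVec_nonneg ?_ ?_
  · exact (Matrix.isHermitian_diagonal _).sub hPherm
  · intro y
    have hxne : ∀ i, x i ≠ 0 := fun i => (hx i).ne'
    have key : ∀ i j, P i j * x i * x j * (y i / x i - y j / x j) ^ 2 =
        P i j * x j * (y i) ^ 2 / x i + P i j * x i * (y j) ^ 2 / x j
          - 2 * (P i j * y i * y j) := by
      intro i j
      have hi := hxne i
      have hj := hxne j
      field_simp
      ring
    have hBA : (∑ i, ∑ j, P i j * x i * (y j) ^ 2 / x j)
        = ∑ i, ∑ j, P i j * x j * (y i) ^ 2 / x i := by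
      rw [Finset.sum_comm]
      exact Finset.sum_congr rfl fun i _ => Finset.sum_congr rfl fun j _ => by
        rw [hPsymm j i]
    have h2 : (∑ i, ∑ j, 2 * (P i j * y i * y j))
        = 2 * ∑ i, ∑ j, P i j * y i * y j := by
      simp [Finset.mul_sum]
    have hsum : (∑ i, ∑ j, P i j * x i * x j * (y i / x i - y j / x j) ^ 2)
        = 2 * ((∑ i, ∑ j, P i j * x j * (y i) ^ 2 / x i)
            - ∑ i, ∑ j, P i j * y i * y j) := by
      calc (∑ i, ∑ j, P i j * x i * x j * (y i / x i - y j / x j) ^ 2)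
          = (∑ i, ∑ j, P i j * x j * (y i) ^ 2 / x i)
            + (∑ i, ∑ j, P i j * x i * (y j) ^ 2 / x j)
            - ∑ i, ∑ j, 2 * (P i j * y i * y j) := by
            simp [key, Finset.sum_add_distrib, Finset.sum_sub_distrib]
        _ = 2 * ((∑ i, ∑ j, P i j * x j * (y i) ^ 2 / x i)
            - ∑ i, ∑ j, P i j * y i * y j) := by
            rw [hBA, h2]; ring
    have hnn : 0 ≤ ∑ i, ∑ j, P i j * x i * x j * (y i / x i - y j / x j) ^ 2 := by
      refine Finset.sum_nonneg fun i _ => Finset.sum_nonneg fun j _ => ?_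
      exact mul_nonneg (mul_nonneg (mul_nonneg (hnonneg i j) (hx i).le) (hx j).le)
        (sq_nonneg _)
    have hdot : star y ⬝ᵥ (Matrix.diagonal (fun i => P.mulVec x i / x i) - P).mulVec y
        = (∑ i, ∑ j, P i j * x j * (y i) ^ 2 / x i) - ∑ i, ∑ j, P i j * y i * y j := by
      simp only [star_trivial, Matrix.sub_mulVec, dotProduct_sub]
      congr 1
      · simp only [dotProduct, Matrix.mulVec_diagonal]
        simp only [Matrix.mulVec, dotProduct]
        refine Finset.sum_congr rfl fun i _ => ?_
        conv_rhs => rw [← Finset.sum_div, ← Finset.sum_mul]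
        ring
      · simp only [dotProduct, Matrix.mulVec, dotProduct, Finset.mul_sum]
        refine Finset.sum_congr rfl fun i _ => Finset.sum_congr rfl fun j _ => ?_
        ring
    rw [hdot]
    linarith [hnn, hsum ▸ hnn]
end

section
/- Let P be an n×n nonnegative symmetric matrix, x ∈ R^n a positive vector, and z ∈ R^n arbitrary. Then Σ_{i,j} (D_{ij} + P_{ij}) x_i x_j z_i z_j = (1/2) Σ_{i,j} P_{ij} x_i x_j (z_i + z_j)^2, where D is diagonal with D_ii = (Px)_i / x_i. In particular the left-hand side is nonnegative. -/
open Matrix Finset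

theorem stmt2 (n : ℕ) (P : Matrix (Fin n) (Fin n) ℝ)
    (hsymm : P.IsSymm) (hnonneg : ∀ i j, 0 ≤ P i j)
    (x : Fin n → ℝ) (hx : ∀ i, 0 < x i) (z : Fin n → ℝ)
    (D : Matrix (Fin n) (Fin n) ℝ)
    (hD : D = Matrix.diagonal (fun i => P.mulVec x i / x i)) :
    (∑ i, ∑ j, (D i j + P i j) * x i * x j * z i * z j
      = (1/2) * ∑ i, ∑ j, P i j * x i * x j * (z i + z j)^2) ∧
    0 ≤ ∑ i, ∑ j, (D i j + P i j) * x i * x j * z i * z j := by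
  have hPsym : ∀ i j, P j i = P i j := fun i j => by
    have := congrFun (congrFun hsymm i) j
    simpa [Matrix.transpose_apply] using this
  have key : ∑ i, ∑ j, (D i j + P i j) * x i * x j * z i * z j
      = (1/2) * ∑ i, ∑ j, P i j * x i * x j * (z i + z j)^2 := by
    subst hD
    have hdiag : ∀ i : Fin n, ∑ j, (Matrix.diagonal (fun i => P.mulVec x i / x i)) i j * x i * x j * z i * z j
        = ∑ j, P i j * x i * x j * (z i * z i) := by
      intro i
      rw [Finset.sum_eq_single i]
      · have hxi := (hx i).ne'
        simp only [Matrix.diagonal_apply_eq, Matrix.mulVec, dotProduct]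
        field_simp
        simp only [Finset.sum_mul]
        apply Finset.sum_congr rfl
        intro k _
        ring
      · intro b _ hb
        simp [Matrix.diagonal_apply_ne _ (Ne.symm hb)]
      · simp
    have hswap : ∑ i, ∑ j, P i j * x i * x j * (z j * z j)
        = ∑ i, ∑ j, P i j * x i * x j * (z i * z i) := by
      rw [Finset.sum_comm]
      exact Finset.sum_congr rfl fun j _ => Finset.sum_congr rfl fun i _ => by
        rw [hPsym i j]; ring
    have expand : ∀ i j : Fin n, P i j * x i * x j * (z i + z j)^2
        = P i j * x i * x j * (z i * z i) + P i j * x i * x j * (z j * z j)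
          + 2 * (P i j * x i * x j * (z i * z j)) := fun i j => by ring
    have hassoc : ∀ i j : Fin n, P i j * x i * x j * z i * z j
        = P i j * x i * x j * (z i * z j) := fun i j => by ring
    have hrhs : ∑ i, ∑ j, P i j * x i * x j * (z i + z j)^2
        = 2 * (∑ i, ∑ j, P i j * x i * x j * (z i * z i))
          + 2 * (∑ i, ∑ j, P i j * x i * x j * (z i * z j)) := by
      simp only [expand, Finset.sum_add_distrib, hswap, ← Finset.mul_sum]
      ring
    simp only [add_mul, Finset.sum_add_distrib, hdiag, hassoc, hrhs]
    ring
  refine ⟨key, ?_⟩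
  rw [key]
  apply mul_nonneg (by norm_num)
  apply Finset.sum_nonneg; intro i _; apply Finset.sum_nonneg; intro j _
  exact mul_nonneg (mul_nonneg (mul_nonneg (hnonneg i j) (hx i).le) (hx j).le) (sq_nonneg _)
end

section
/- Let Q ∈ R^{n×n} be symmetric, h ∈ R^n, δ > 0, and F(x) = (1/2)xᵀQx − xᵀh. For positive vectors x, y, define D(y) diagonal with D(y)_ii = ((|Q|y)_i + h_i^- + δ)/y_i, and G(x,y) = F(y) + (x−y)ᵀ∇F(y) + (1/2)(x−y)ᵀD(y)(x−y). Then G(x,y) > F(x) whenever x ≠ y, and G(x,x) = F(x); i.e., G is an auxiliary function for F on positive vectors. -/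
open Matrix Finset

theorem stmt6 (n : ℕ) (Q : Matrix (Fin n) (Fin n) ℝ) (hQ : Q.IsSymm)
    (h : Fin n → ℝ) (δ : ℝ) (hδ : 0 < δ)
    (F : (Fin n → ℝ) → ℝ)
    (hF : ∀ x, F x = (1/2) * (x ⬝ᵥ Q.mulVec x) - x ⬝ᵥ h)
    (x y : Fin n → ℝ) (hx : ∀ i, 0 < x i) (hy : ∀ i, 0 < y i)
    (D : (Fin n → ℝ) → Matrix (Fin n) (Fin n) ℝ)
    (hD : ∀ v, D v = Matrix.diagonal
      (fun i => ((Matrix.of fun i j => |Q i j|).mulVec v i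
        + max (-(h i)) 0 + δ) / v i))
    (G : (Fin n → ℝ) → (Fin n → ℝ) → ℝ)
    (hG : ∀ u v, G u v = F v + (u - v) ⬝ᵥ (Q.mulVec v - h)
      + (1/2) * ((u - v) ⬝ᵥ (D v).mulVec (u - v))) :
    (x ≠ y → F x < G x y) ∧ G x x = F x := by
  constructor
  · intro hxy
    have hGxy := hG x y
    set z : Fin n → ℝ := x - y with hzdef
    have hz0 : z ≠ 0 := sub_ne_zero.mpr hxy
    obtain ⟨i0, hi0⟩ := Function.ne_iff.mp hz0
    simp only [Pi.zero_apply] at hi0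
    -- symmetry of the quadratic form
    have hsym : ∀ u v : Fin n → ℝ, u ⬝ᵥ Q.mulVec v = v ⬝ᵥ Q.mulVec u := by
      intro u v
      simp only [dotProduct, Matrix.mulVec, Finset.mul_sum]
      rw [Finset.sum_comm]
      refine Finset.sum_congr rfl fun i _ => Finset.sum_congr rfl fun j _ => ?_
      rw [hQ.apply i j]
      ring
    -- Taylor identity
    have hid : F x = F y + z ⬝ᵥ (Q.mulVec y - h) + (1/2) * (z ⬝ᵥ Q.mulVec z) := by
      rw [hF x, hF y, hzdef]
      simp only [sub_dotProduct, dotProduct_sub, Matrix.mulVec_sub]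
      rw [hsym y x]
      ring
    set A : Fin n → ℝ := fun i => ∑ j, |Q i j| * y j with hA
    -- bound on z Q z
    have hQz : z ⬝ᵥ Q.mulVec z = ∑ i, ∑ j, z i * (Q i j * z j) := by
      simp [dotProduct, Matrix.mulVec, Finset.mul_sum]
    have key : ∀ i j, z i * (Q i j * z j) ≤
        (|Q i j| * y j) * (z i ^ 2 / (2 * y i)) + (|Q i j| * y i) * (z j ^ 2 / (2 * y j)) := by
      intro i j
      have hyi := hy i
      have hyj := hy j
      have h1 : z i * (Q i j * z j) ≤ |Q i j| * (|z i| * |z j|) := by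
        calc z i * (Q i j * z j) ≤ |z i * (Q i j * z j)| := le_abs_self _
        _ = |Q i j| * (|z i| * |z j|) := by rw [abs_mul, abs_mul]; ring
      have h2 : 2 * (y i * y j) * (|z i| * |z j|) ≤ y j ^ 2 * z i ^ 2 + y i ^ 2 * z j ^ 2 := by
        nlinarith [sq_nonneg (y j * |z i| - y i * |z j|), sq_abs (z i), sq_abs (z j)]
      have h3 : |z i| * |z j| ≤ y j * z i ^ 2 / (2 * y i) + y i * z j ^ 2 / (2 * y j) := by
        rw [div_add_div _ _ (by positivity) (by positivity), le_div_iff₀ (by positivity)]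
        nlinarith [h2]
      calc z i * (Q i j * z j) ≤ |Q i j| * (|z i| * |z j|) := h1
        _ ≤ |Q i j| * (y j * z i ^ 2 / (2 * y i) + y i * z j ^ 2 / (2 * y j)) :=
            mul_le_mul_of_nonneg_left h3 (abs_nonneg _)
        _ = (|Q i j| * y j) * (z i ^ 2 / (2 * y i)) + (|Q i j| * y i) * (z j ^ 2 / (2 * y j)) := by
            ring
    have hbound : z ⬝ᵥ Q.mulVec z ≤ ∑ i, A i * z i ^ 2 / y i := by
      rw [hQz]
      have e1 : ∑ i, ∑ j, (|Q i j| * y j) * (z i ^ 2 / (2 * y i))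
          = ∑ i, A i * (z i ^ 2 / (2 * y i)) := by
        refine Finset.sum_congr rfl fun i _ => ?_
        rw [← Finset.sum_mul]
      have e2 : ∑ i, ∑ j, (|Q i j| * y i) * (z j ^ 2 / (2 * y j))
          = ∑ i, A i * (z i ^ 2 / (2 * y i)) := by
        rw [Finset.sum_comm]
        refine Finset.sum_congr rfl fun j _ => ?_
        rw [← Finset.sum_mul]
        congr 1
        refine Finset.sum_congr rfl fun i _ => ?_
        rw [show |Q i j| = |Q j i| by rw [hQ.apply j i]]
      calc ∑ i, ∑ j, z i * (Q i j * z j)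
          ≤ ∑ i, ∑ j, ((|Q i j| * y j) * (z i ^ 2 / (2 * y i))
              + (|Q i j| * y i) * (z j ^ 2 / (2 * y j))) := by
            refine Finset.sum_le_sum fun i _ => Finset.sum_le_sum fun j _ => key i j
        _ = ∑ i, A i * (z i ^ 2 / (2 * y i)) + ∑ i, A i * (z i ^ 2 / (2 * y i)) := by
            simp only [Finset.sum_add_distrib]
            rw [e1, e2]
        _ = ∑ i, A i * z i ^ 2 / y i := by
            rw [← Finset.sum_add_distrib]
            refine Finset.sum_congr rfl fun i _ => ?_
            have := (hy i).ne'
            field_simp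
            ring
    -- value of z D z
    have hDz : z ⬝ᵥ (D y).mulVec z = ∑ i, (A i + max (-(h i)) 0 + δ) / y i * z i ^ 2 := by
      rw [hD]
      simp only [dotProduct, Matrix.mulVec_diagonal]
      refine Finset.sum_congr rfl fun i _ => ?_
      have : (Matrix.of fun i j => |Q i j|).mulVec y i = A i := by
        simp [Matrix.mulVec, dotProduct, hA]
      rw [this]
      ring
    -- strict comparison
    have hlt : ∑ i, A i * z i ^ 2 / y i < ∑ i, (A i + max (-(h i)) 0 + δ) / y i * z i ^ 2 := by
      refine Finset.sum_lt_sum (fun i _ => ?_) ⟨i0, Finset.mem_univ i0, ?_⟩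
      · rw [div_mul_eq_mul_div, div_le_div_iff₀ (hy i) (hy i)]
        have hm : 0 ≤ max (-(h i)) 0 := le_max_right _ _
        nlinarith [mul_nonneg (mul_nonneg (add_nonneg hm hδ.le) (sq_nonneg (z i))) (hy i).le]
      · rw [div_mul_eq_mul_div, div_lt_div_iff₀ (hy i0) (hy i0)]
        have hm : 0 ≤ max (-(h i0)) 0 := le_max_right _ _
        have hz2 : 0 < z i0 ^ 2 := lt_of_le_of_ne (sq_nonneg _) (Ne.symm (pow_ne_zero 2 hi0))
        nlinarith [mul_pos (mul_pos (add_pos_of_nonneg_of_pos hm hδ) hz2) (hy i0)]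
    have hfin : z ⬝ᵥ Q.mulVec z < z ⬝ᵥ (D y).mulVec z := by
      rw [hDz]; exact lt_of_le_of_lt hbound hlt
    rw [hGxy, hid]
    linarith
  · rw [hG, sub_self]
    simp
end

section
/- Let Q ∈ R^{n×n} be symmetric, y ∈ R^n a positive vector, h ∈ R^n, δ > 0. Then the matrix D(y) − Q is positive definite, where D(y) is diagonal with D(y)_ii = ((|Q|y)_i + h_i^- + δ)/y_i. -/
open Matrix Finset
theorem stmt7 (n : ℕ) (Q : Matrix (Fin n) (Fin n) ℝ) (hQ : Q.IsSymm)
    (h : Fin n → ℝ) (δ : ℝ) (hδ : 0 < δ)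
    (y : Fin n → ℝ) (hy : ∀ i, 0 < y i) :
    (Matrix.diagonal
      (fun i => ((Matrix.of fun i j => |Q i j|).mulVec y i
        + max (-(h i)) 0 + δ) / y i) - Q).PosDef := by
  refine Matrix.PosDef.of_dotProduct_mulVec_pos (Matrix.IsHermitian.sub (Matrix.isHermitian_diagonal _) hQ) ?_
  intro x hx
  simp only [star_trivial]
  have hQs : ∀ i j, Q j i = Q i j := fun i j => hQ.apply i j
  have expand : x ⬝ᵥ ((Matrix.diagonal
      (fun i => ((Matrix.of fun i j => |Q i j|).mulVec y i
        + max (-(h i)) 0 + δ) / y i) - Q) *ᵥ x)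
      = (∑ i, (∑ j, |Q i j| * y j + max (-(h i)) 0 + δ) / y i * x i ^ 2)
        - ∑ i, ∑ j, Q i j * x i * x j := by
    simp only [Matrix.sub_mulVec, dotProduct, Pi.sub_apply, Matrix.mulVec_diagonal,
      Matrix.mulVec, dotProduct, Matrix.of_apply, Finset.mul_sum]
    rw [← Finset.sum_sub_distrib]
    refine Finset.sum_congr rfl fun i _ => ?_
    simp only [Matrix.sub_apply, Matrix.diagonal_apply, mul_sub, sub_mul, Finset.sum_sub_distrib,
      mul_ite, ite_mul, mul_zero, zero_mul, Finset.sum_ite_eq, Finset.mem_univ, if_true]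
    have hrw : (∑ j, x i * (Q i j * x j)) = ∑ j, Q i j * x i * x j :=
      Finset.sum_congr rfl fun j _ => by ring
    rw [hrw]; ring
  rw [expand]
  have hsplit : ∀ i : Fin n, (∑ j, |Q i j| * y j + max (-(h i)) 0 + δ) / y i * x i ^ 2
      = (∑ j, |Q i j| * (y j / y i) * x i ^ 2) + (max (-(h i)) 0 + δ) / y i * x i ^ 2 := by
    intro i
    have hstep : ∑ j, |Q i j| * (y j / y i) * x i ^ 2
        = (∑ j, |Q i j| * y j) / y i * x i ^ 2 := by
      rw [Finset.sum_div, Finset.sum_mul]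
      exact Finset.sum_congr rfl fun j _ => by ring
    rw [hstep]; ring
  have hD : (∑ i, (∑ j, |Q i j| * y j + max (-(h i)) 0 + δ) / y i * x i ^ 2)
      = (∑ i, ∑ j, |Q i j| * (y j / y i) * x i ^ 2)
        + ∑ i, (max (-(h i)) 0 + δ) / y i * x i ^ 2 := by
    rw [Finset.sum_congr rfl fun i _ => hsplit i, Finset.sum_add_distrib]
  rw [hD]
  -- the off-diagonal bound
  have key : ∀ i j, Q i j * x i * x j
      ≤ |Q i j| * ((y j / y i) * x i ^ 2 + (y i / y j) * x j ^ 2) / 2 := by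
    intro i j
    have hyi := hy i; have hyj := hy j
    have h2 : |x i| * |x j| ≤ ((y j / y i) * x i ^ 2 + (y i / y j) * x j ^ 2) / 2 := by
      rw [le_div_iff₀ (by norm_num : (0:ℝ) < 2), div_mul_eq_mul_div, div_mul_eq_mul_div,
        div_add_div _ _ (ne_of_gt hyi) (ne_of_gt hyj), le_div_iff₀ (mul_pos hyi hyj)]
      have key2 : 2 * (y i * y j) * (|x i| * |x j|) ≤ y j ^ 2 * x i ^ 2 + y i ^ 2 * x j ^ 2 := by
        nlinarith [sq_nonneg (y j * |x i| - y i * |x j|), sq_abs (x i), sq_abs (x j)]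
      linarith [key2]
    calc Q i j * x i * x j ≤ |Q i j * x i * x j| := le_abs_self _
      _ = |Q i j| * (|x i| * |x j|) := by rw [abs_mul, abs_mul, mul_assoc]
      _ ≤ |Q i j| * (((y j / y i) * x i ^ 2 + (y i / y j) * x j ^ 2) / 2) :=
          mul_le_mul_of_nonneg_left h2 (abs_nonneg _)
      _ = |Q i j| * ((y j / y i) * x i ^ 2 + (y i / y j) * x j ^ 2) / 2 := by ring
  have hswap : (∑ i, ∑ j, |Q i j| * ((y i / y j) * x j ^ 2) / 2)
      = ∑ i, ∑ j, |Q i j| * ((y j / y i) * x i ^ 2) / 2 := by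
    rw [Finset.sum_comm]
    exact Finset.sum_congr rfl fun i _ => Finset.sum_congr rfl fun j _ => by rw [hQs j i]
  have hQF : (∑ i, ∑ j, Q i j * x i * x j)
      ≤ ∑ i, ∑ j, |Q i j| * (y j / y i) * x i ^ 2 := by
    calc (∑ i, ∑ j, Q i j * x i * x j)
        ≤ ∑ i, ∑ j, |Q i j| * ((y j / y i) * x i ^ 2 + (y i / y j) * x j ^ 2) / 2 :=
          Finset.sum_le_sum fun i _ => Finset.sum_le_sum fun j _ => key i j
      _ = (∑ i, ∑ j, |Q i j| * ((y j / y i) * x i ^ 2) / 2)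
            + ∑ i, ∑ j, |Q i j| * ((y i / y j) * x j ^ 2) / 2 := by
          rw [← Finset.sum_add_distrib]
          refine Finset.sum_congr rfl fun i _ => ?_
          rw [← Finset.sum_add_distrib]
          exact Finset.sum_congr rfl fun j _ => by ring
      _ = ∑ i, ∑ j, |Q i j| * (y j / y i) * x i ^ 2 := by
          rw [hswap, ← Finset.sum_add_distrib]
          refine Finset.sum_congr rfl fun i _ => ?_
          rw [← Finset.sum_add_distrib]
          exact Finset.sum_congr rfl fun j _ => by ring
  obtain ⟨k, hk⟩ : ∃ k, x k ≠ 0 := by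
    by_contra hc; push_neg at hc; exact hx (funext hc)
  have hT : 0 < ∑ i, (max (-(h i)) 0 + δ) / y i * x i ^ 2 := by
    refine Finset.sum_pos' (fun i _ => ?_) ⟨k, Finset.mem_univ k, ?_⟩
    · exact mul_nonneg (div_nonneg (by positivity) (hy i).le) (sq_nonneg _)
    · exact mul_pos (div_pos (by positivity) (hy k))
        (lt_of_le_of_ne (sq_nonneg _) (Ne.symm (pow_ne_zero 2 hk)))
  linarith [hQF, hT]
end

section
/- For the multiplicative update x_i^{k+1} = x_i^k · (2(Q^- x^k)_i + h_i^+ + δ)/((|Q| x^k)_i + h_i^- + δ), the increment satisfies x_i^{k+1} − x_i^k = −γ_i^k ((Qx^k)_i − h_i), where γ_i^k = x_i^k / ((|Q|x^k)_i + h_i^- + δ). Hence the update is a (coordinate-wise scaled) gradient descent step for F(x) = (1/2)xᵀQx − xᵀh. -/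
open Matrix

theorem stmt9 (n : ℕ) (Q : Matrix (Fin n) (Fin n) ℝ)
    (h : Fin n → ℝ) (δ : ℝ) (hδ : 0 < δ)
    (xk xk1 : Fin n → ℝ) (hxk : ∀ i, 0 < xk i)
    (Qm absQ : Matrix (Fin n) (Fin n) ℝ)
    (hQm : Qm = fun i j => max (-(Q i j)) 0)
    (habsQ : absQ = fun i j => |Q i j|)
    (hupd : ∀ i, xk1 i = xk i * (2 * Qm.mulVec xk i + max (h i) 0 + δ)
      / (absQ.mulVec xk i + max (-(h i)) 0 + δ)) :
    ∀ i, xk1 i - xk i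
      = -(xk i / (absQ.mulVec xk i + max (-(h i)) 0 + δ)) * (Q.mulVec xk i - h i) := by
  intro i
  have hden : 0 < absQ.mulVec xk i + max (-(h i)) 0 + δ := by
    have h1 : 0 ≤ absQ.mulVec xk i := by
      subst habsQ
      simp only [mulVec, dotProduct]
      apply Finset.sum_nonneg
      intro j _
      exact mul_nonneg (abs_nonneg _) (hxk j).le
    have h2 : 0 ≤ max (-(h i)) 0 := le_max_right _ _
    linarith
  have key : 2 * Qm.mulVec xk i - absQ.mulVec xk i = -(Q.mulVec xk i) := by
    subst hQm habsQ
    simp only [mulVec, dotProduct, Finset.mul_sum, ← Finset.sum_sub_distrib, ← Finset.sum_neg_distrib]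
    apply Finset.sum_congr rfl
    intro j _
    have : 2 * max (-(Q i j)) 0 - |Q i j| = -(Q i j) := by
      rcases le_or_gt (Q i j) 0 with hq | hq
      · rw [max_eq_left (by linarith), abs_of_nonpos hq]; ring
      · rw [max_eq_right (by linarith), abs_of_pos hq]; ring
    linear_combination xk j * this
  have hmax : max (h i) 0 - max (-(h i)) 0 = h i := by
    rcases le_or_gt (h i) 0 with hq | hq
    · rw [max_eq_right hq, max_eq_left (by linarith)]; ring
    · rw [max_eq_left hq.le, max_eq_right (by linarith)]; ring
  rw [hupd i]
  field_simp
  linear_combination xk i * key + xk i * hmax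
end

section
/- With D(x^k) diagonal, D(x^k)_ii = ((|Q|x^k)_i + h_i^- + δ)/x_i^k for a positive vector x^k, the Newton-like step x = x^k − D(x^k)^{-1}(Qx^k − h) equals the multiplicative update: x_i = x_i^k · (2(Q^- x^k)_i + h_i^+ + δ)/((|Q|x^k)_i + h_i^- + δ). -/
open Matrix

theorem stmt14 (n : ℕ) (Q : Matrix (Fin n) (Fin n) ℝ)
    (h : Fin n → ℝ) (δ : ℝ) (hδ : 0 < δ)
    (Qm absQ : Matrix (Fin n) (Fin n) ℝ)
    (hQm : Qm = fun i j => max (-(Q i j)) 0)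
    (habsQ : absQ = fun i j => |Q i j|)
    (xk : Fin n → ℝ) (hxk : ∀ i, 0 < xk i)
    (d : Fin n → ℝ)
    (hd : ∀ i, d i = (absQ.mulVec xk i + max (-(h i)) 0 + δ) / xk i) :
    ∀ i, xk i - (Q.mulVec xk i - h i) / d i
      = xk i * (2 * Qm.mulVec xk i + max (h i) 0 + δ)
        / (absQ.mulVec xk i + max (-(h i)) 0 + δ) := by
  intro i
  have habs : absQ.mulVec xk i = Q.mulVec xk i + 2 * Qm.mulVec xk i := by
    simp only [mulVec, dotProduct, hQm, habsQ, Finset.mul_sum, ← Finset.sum_add_distrib]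
    apply Finset.sum_congr rfl
    intro j _
    have : |Q i j| = Q i j + 2 * max (-(Q i j)) 0 := by
      rcases le_or_gt 0 (Q i j) with hq | hq
      · rw [abs_of_nonneg hq, max_eq_right (by linarith)]; ring
      · rw [abs_of_neg hq, max_eq_left (by linarith)]; ring
    rw [this]; ring
  have hQnn : 0 ≤ absQ.mulVec xk i := by
    simp only [mulVec, dotProduct]
    apply Finset.sum_nonneg
    intro j _
    exact mul_nonneg (by rw [habsQ]; exact abs_nonneg _) (hxk j).le
  have hDpos : 0 < absQ.mulVec xk i + max (-(h i)) 0 + δ := by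
    have : (0:ℝ) ≤ max (-(h i)) 0 := le_max_right _ _
    linarith
  have hh : max (h i) 0 - max (-(h i)) 0 = h i := by
    rcases le_or_gt 0 (h i) with hq | hq
    · rw [max_eq_left hq, max_eq_right (by linarith)]; ring
    · rw [max_eq_right hq.le, max_eq_left (by linarith)]; ring
  rw [hd i, div_div_eq_mul_div, eq_div_iff hDpos.ne', sub_mul,
    div_mul_cancel₀ _ hDpos.ne', habs]
  linear_combination (-(xk i)) * hh
end

section
/- Let F(x) = (1/2)xᵀQx − xᵀh with Q symmetric positive definite, and let x^{k+1} be defined by the multiplicative update x_i^{k+1} = x_i^k (2(Q^-x^k)_i + h_i^+ + δ)/((|Q|x^k)_i + h_i^- + δ) starting from a positive x^0. Then F(x^{k+1}) ≤ F(x^k) for all k, with strict inequality whenever x^{k+1} ≠ x^k. -/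
open Matrix

private lemma amgm_aux (p q a b : ℝ) (hp : 0 < p) (hq : 0 < q) :
    2 * (|a| * |b|) ≤ q * a ^ 2 / p + p * b ^ 2 / q := by
  rw [div_add_div _ _ hp.ne' hq.ne', le_div_iff₀ (by positivity)]
  ring_nf
  nlinarith [sq_nonneg (q * |a| - p * |b|), sq_abs a, sq_abs b,
    abs_nonneg a, abs_nonneg b, mul_pos hp hq]

theorem stmt16 (n : ℕ) (Q : Matrix (Fin n) (Fin n) ℝ) (hQ : Q.PosDef)
    (h : Fin n → ℝ) (δ : ℝ) (hδ : 0 < δ)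
    (Qm absQ : Matrix (Fin n) (Fin n) ℝ)
    (hQm : Qm = fun i j => max (-(Q i j)) 0)
    (habsQ : absQ = fun i j => |Q i j|)
    (F : (Fin n → ℝ) → ℝ)
    (hF : ∀ x, F x = (1/2) * (x ⬝ᵥ Q.mulVec x) - x ⬝ᵥ h)
    (x : ℕ → Fin n → ℝ) (hx0 : ∀ i, 0 < x 0 i)
    (hupd : ∀ k i, x (k+1) i = x k i * (2 * Qm.mulVec (x k) i + max (h i) 0 + δ)
      / (absQ.mulVec (x k) i + max (-(h i)) 0 + δ)) :
    ∀ k, F (x (k+1)) ≤ F (x k) ∧ (x (k+1) ≠ x k → F (x (k+1)) < F (x k)) := by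
  have hsym : Qᵀ = Q := hQ.isHermitian.eq
  have hsym' : ∀ i j, Q j i = Q i j := by
    intro i j
    rw [← Matrix.transpose_apply Q i j, hsym]
  have habs' : ∀ i j, absQ i j = |Q i j| := by
    subst habsQ; intro i j; rfl
  have habs_nonneg : ∀ i j, (0:ℝ) ≤ absQ i j := by
    intro i j; rw [habs']; exact abs_nonneg _
  have habs_symm : ∀ i j, absQ j i = absQ i j := by
    intro i j; rw [habs', habs', hsym' i j]
  have hQm_nonneg : ∀ i j, (0:ℝ) ≤ Qm i j := by
    subst hQm; intro i j; exact le_max_right _ _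
  -- all iterates are positive
  have hpos : ∀ k i, 0 < x k i := by
    intro k
    induction k with
    | zero => exact hx0
    | succ k ih =>
      intro i
      have hnum : 0 ≤ Qm.mulVec (x k) i := by
        simp only [mulVec, dotProduct]
        exact Finset.sum_nonneg fun j _ => mul_nonneg (hQm_nonneg i j) (ih j).le
      have hden : 0 ≤ absQ.mulVec (x k) i := by
        simp only [mulVec, dotProduct]
        exact Finset.sum_nonneg fun j _ => mul_nonneg (habs_nonneg i j) (ih j).le
      rw [hupd]
      apply div_pos
      · have h1 := le_max_right (h i) (0:ℝ)
        nlinarith [ih i]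
      · have h1 := le_max_right (-(h i)) (0:ℝ)
        linarith
  intro k
  set y : Fin n → ℝ := x k with hy
  set z : Fin n → ℝ := x (k+1) with hz
  have hyp : ∀ i, 0 < y i := hpos k
  set d : Fin n → ℝ := fun i => absQ.mulVec y i + max (-(h i)) 0 + δ with hd
  have hdpos : ∀ i, 0 < d i := by
    intro i
    have hden : 0 ≤ absQ.mulVec y i := by
      simp only [mulVec, dotProduct]
      exact Finset.sum_nonneg fun j _ => mul_nonneg (habs_nonneg i j) (hyp j).le
    have h1 := le_max_right (-(h i)) (0:ℝ)
    simp only [hd]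
    linarith
  set s : Fin n → ℝ := fun i => z i - y i with hs
  -- |Q|y = Qy + 2 Qm y entrywise
  have habs_eq : ∀ i, absQ.mulVec y i = Q.mulVec y i + 2 * Qm.mulVec y i := by
    intro i
    subst habsQ hQm
    simp only [mulVec, dotProduct]
    rw [Finset.mul_sum, ← Finset.sum_add_distrib]
    refine Finset.sum_congr rfl fun j _ => ?_
    have habs1 : |Q i j| = Q i j + 2 * max (-(Q i j)) 0 := by
      rcases le_total (Q i j) 0 with hle | hle
      · rw [abs_of_nonpos hle, max_eq_left (by linarith)]; ring
      · rw [abs_of_nonneg hle, max_eq_right (by linarith)]; ring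
    rw [habs1]; ring
  -- key identity: d i * s i = - y i * (Qy - h)_i
  have hkey : ∀ i, d i * s i = -(y i * (Q.mulVec y i - h i)) := by
    intro i
    have hdi := (hdpos i).ne'
    have hzi : z i = y i * (2 * Qm.mulVec y i + max (h i) 0 + δ) / d i := hupd k i
    have hmax : max (h i) 0 - max (-(h i)) 0 = h i := by
      rcases le_total (h i) 0 with hle | hle
      · rw [max_eq_right hle, max_eq_left (by linarith)]; ring
      · rw [max_eq_left hle, max_eq_right (by linarith)]; ring
    have hNd : (2 * Qm.mulVec y i + max (h i) 0 + δ) - d i = h i - Q.mulVec y i := by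
      simp only [hd]
      rw [habs_eq i]
      linarith
    have hdz : d i * z i = y i * (2 * Qm.mulVec y i + max (h i) 0 + δ) := by
      rw [hzi, mul_div_assoc']
      field_simp
    simp only [hs]
    rw [mul_sub, hdz]
    linear_combination (y i) * hNd
  -- quadratic expansion
  have hcross : y ⬝ᵥ Q.mulVec s = s ⬝ᵥ Q.mulVec y := by
    rw [dotProduct_mulVec, ← mulVec_transpose, hsym, dotProduct_comm]
  have hzys : z = y + s := by
    funext i; simp [hs]
  have hexpand : F z - F y = (∑ i, s i * (Q.mulVec y i - h i))
      + (1/2) * (∑ i, s i * Q.mulVec s i) := by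
    have e1 : (y + s) ⬝ᵥ Q.mulVec (y + s)
        = y ⬝ᵥ Q.mulVec y + 2 * (s ⬝ᵥ Q.mulVec y) + s ⬝ᵥ Q.mulVec s := by
      rw [mulVec_add, dotProduct_add, add_dotProduct, add_dotProduct, hcross]
      ring
    have e2 : (y + s) ⬝ᵥ h = y ⬝ᵥ h + s ⬝ᵥ h := add_dotProduct _ _ _
    have e3 : ∑ i, s i * (Q.mulVec y i - h i) = s ⬝ᵥ Q.mulVec y - s ⬝ᵥ h := by
      simp only [dotProduct, ← Finset.sum_sub_distrib]
      exact Finset.sum_congr rfl fun i _ => by ring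
    have e4 : ∑ i, s i * Q.mulVec s i = s ⬝ᵥ Q.mulVec s := rfl
    rw [hF, hF, hzys, e1, e2, e3, e4]
    ring
  -- first sum identity
  have hsum1 : ∑ i, s i * (Q.mulVec y i - h i) = -∑ i, d i / y i * s i ^ 2 := by
    rw [← Finset.sum_neg_distrib]
    refine Finset.sum_congr rfl fun i _ => ?_
    rw [div_mul_eq_mul_div, ← neg_div, eq_div_iff (hyp i).ne']
    linear_combination (s i) * hkey i
  -- second sum inequality
  have hsum2 : ∑ i, s i * Q.mulVec s i ≤ ∑ i, d i / y i * s i ^ 2 := by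
    have hexp : ∑ i, s i * Q.mulVec s i = ∑ i, ∑ j, Q i j * s i * s j := by
      refine Finset.sum_congr rfl fun i _ => ?_
      simp only [mulVec, dotProduct, Finset.mul_sum]
      exact Finset.sum_congr rfl fun j _ => by ring
    set T : ℝ := ∑ i, ∑ j, absQ i j * (y j * s i ^ 2 / y i) with hT
    have hTswap : T = ∑ i, ∑ j, absQ i j * (y i * s j ^ 2 / y j) := by
      rw [hT, Finset.sum_comm]
      refine Finset.sum_congr rfl fun i _ => Finset.sum_congr rfl fun j _ => ?_
      rw [habs_symm]
    have hdouble : (2:ℝ) * (∑ i, ∑ j, Q i j * s i * s j) ≤ 2 * T := by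
      calc (2:ℝ) * (∑ i, ∑ j, Q i j * s i * s j)
          = ∑ i, ∑ j, 2 * (Q i j * s i * s j) := by
            simp [Finset.mul_sum]
        _ ≤ ∑ i, ∑ j, (absQ i j * (y j * s i ^ 2 / y i)
              + absQ i j * (y i * s j ^ 2 / y j)) := by
            refine Finset.sum_le_sum fun i _ => Finset.sum_le_sum fun j _ => ?_
            have h1 : Q i j * s i * s j ≤ |Q i j| * (|s i| * |s j|) := by
              calc Q i j * s i * s j ≤ |Q i j * s i * s j| := le_abs_self _
                _ = |Q i j| * (|s i| * |s j|) := by rw [abs_mul, abs_mul]; ring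
            have h2 := amgm_aux (y i) (y j) (s i) (s j) (hyp i) (hyp j)
            have h3 := mul_le_mul_of_nonneg_left h2 (abs_nonneg (Q i j))
            rw [habs']
            calc 2 * (Q i j * s i * s j)
                ≤ 2 * (|Q i j| * (|s i| * |s j|)) := by linarith
              _ = |Q i j| * (2 * (|s i| * |s j|)) := by ring
              _ ≤ |Q i j| * (y j * s i ^ 2 / y i + y i * s j ^ 2 / y j) := h3
              _ = |Q i j| * (y j * s i ^ 2 / y i)
                  + |Q i j| * (y i * s j ^ 2 / y j) := mul_add _ _ _
        _ = T + (∑ i, ∑ j, absQ i j * (y i * s j ^ 2 / y j)) := by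
            rw [hT, ← Finset.sum_add_distrib]
            exact Finset.sum_congr rfl fun i _ => by rw [← Finset.sum_add_distrib]
        _ = 2 * T := by rw [← hTswap]; ring
    have hTle : T ≤ ∑ i, d i / y i * s i ^ 2 := by
      rw [hT]
      refine Finset.sum_le_sum fun i _ => ?_
      have e5 : ∑ j, absQ i j * (y j * s i ^ 2 / y i)
          = absQ.mulVec y i * (s i ^ 2 / y i) := by
        simp only [mulVec, dotProduct, Finset.sum_mul]
        exact Finset.sum_congr rfl fun j _ => by ring
      rw [e5]
      have hdi : absQ.mulVec y i ≤ d i := by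
        have h1 := le_max_right (-(h i)) (0:ℝ)
        simp only [hd]
        linarith
      have hsq : 0 ≤ s i ^ 2 / y i := div_nonneg (sq_nonneg _) (hyp i).le
      calc absQ.mulVec y i * (s i ^ 2 / y i) ≤ d i * (s i ^ 2 / y i) :=
            mul_le_mul_of_nonneg_right hdi hsq
        _ = d i / y i * s i ^ 2 := by ring
    rw [hexp]
    linarith
  -- assemble
  have hterm_nonneg : ∀ i ∈ Finset.univ, (0:ℝ) ≤ d i / y i * s i ^ 2 := fun i _ =>
    mul_nonneg (div_nonneg (hdpos i).le (hyp i).le) (sq_nonneg _)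
  have hSnonneg : (0:ℝ) ≤ ∑ i, d i / y i * s i ^ 2 :=
    Finset.sum_nonneg hterm_nonneg
  have hle : F z - F y ≤ -(1/2) * ∑ i, d i / y i * s i ^ 2 := by
    rw [hexpand, hsum1]
    linarith
  constructor
  · linarith
  · intro hne
    have hex : ∃ i, s i ≠ 0 := by
      by_contra hc
      push_neg at hc
      apply hne
      funext i
      have := hc i
      simp only [hs] at this
      linarith
    obtain ⟨i, hi⟩ := hex
    have hipos : 0 < d i / y i * s i ^ 2 := by
      have h3 : 0 < s i ^ 2 :=
        lt_of_le_of_ne (sq_nonneg _) (Ne.symm (pow_ne_zero 2 hi))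
      exact mul_pos (div_pos (hdpos i) (hyp i)) h3
    have hSpos : 0 < ∑ i, d i / y i * s i ^ 2 :=
      Finset.sum_pos' hterm_nonneg ⟨i, Finset.mem_univ i, hipos⟩
    linarith
end

section
/- Let x* ≥ 0 and μ ≥ 0 satisfy the KKT conditions for min F(x) = (1/2)xᵀQx − xᵀh subject to x ≥ 0: that is, Qx* − h − μ = 0 componentwise where x*_i > 0 implies μ_i = 0, and μ_i x*_i = 0. Then for each i with x*_i > 0, (Qx*)_i = h_i, and therefore x* is a fixed point of the multiplicative update x_i ↦ x_i (2(Q^-x)_i + h_i^+ + δ)/((|Q|x)_i + h_i^- + δ). -/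
open Matrix

theorem stmt17 (n : ℕ) (Q : Matrix (Fin n) (Fin n) ℝ) (hQ : Q.IsSymm)
    (h : Fin n → ℝ) (δ : ℝ) (hδ : 0 < δ)
    (Qm absQ : Matrix (Fin n) (Fin n) ℝ)
    (hQm : Qm = fun i j => max (-(Q i j)) 0)
    (habsQ : absQ = fun i j => |Q i j|)
    (xs μ : Fin n → ℝ) (hxs : ∀ i, 0 ≤ xs i) (hμ : ∀ i, 0 ≤ μ i)
    (hstat : ∀ i, (Q.mulVec xs i - h i - μ i) * xs i = 0)
    (hcs : ∀ i, μ i * xs i = 0) :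
    (∀ i, 0 < xs i → Q.mulVec xs i = h i) ∧
    (∀ i, xs i * ((2 * Qm.mulVec xs i + max (h i) 0 + δ)
      / (absQ.mulVec xs i + max (-(h i)) 0 + δ)) = xs i) := by
  have key : ∀ i, 0 < xs i → Q.mulVec xs i = h i := by
    intro i hi
    have hμi : μ i = 0 := by
      have := hcs i
      rcases mul_eq_zero.mp this with h1 | h1
      · exact h1
      · exact absurd h1 (ne_of_gt hi)
    have := hstat i
    rcases mul_eq_zero.mp this with h1 | h1
    · linarith [h1]
    · exact absurd h1 (ne_of_gt hi)
  refine ⟨key, fun i => ?_⟩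
  rcases eq_or_lt_of_le (hxs i) with h0 | h0
  · simp [← h0]
  · have habs : absQ.mulVec xs i = Q.mulVec xs i + 2 * Qm.mulVec xs i := by
      simp only [mulVec, dotProduct, hQm, habsQ]
      rw [Finset.mul_sum, ← Finset.sum_add_distrib]
      congr 1; ext j
      have : |Q i j| = Q i j + 2 * max (-(Q i j)) 0 := by
        rcases le_total (Q i j) 0 with hle | hle
        · rw [abs_of_nonpos hle, max_eq_left (by linarith)]; ring
        · rw [abs_of_nonneg hle, max_eq_right (by linarith)]; ring
      rw [this]; ring
    have hden : 0 < absQ.mulVec xs i + max (-(h i)) 0 + δ := by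
      have : 0 ≤ absQ.mulVec xs i := by
        simp only [mulVec, dotProduct]
        apply Finset.sum_nonneg
        intro j _
        exact mul_nonneg (by simp [habsQ, abs_nonneg]) (hxs j)
      have hm : 0 ≤ max (-(h i)) 0 := le_max_right _ _
      linarith
    have hQx : Q.mulVec xs i = h i := key i h0
    have hnum : 2 * Qm.mulVec xs i + max (h i) 0 + δ
        = absQ.mulVec xs i + max (-(h i)) 0 + δ := by
      rw [habs, hQx]
      have : max (h i) 0 = h i + max (-(h i)) 0 := by
        rcases le_total (h i) 0 with hle | hle
        · rw [max_eq_right hle, max_eq_left (by linarith)]; ring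
        · rw [max_eq_left hle, max_eq_right (by linarith)]; ring
      rw [this]; ring
    rw [hnum, div_self (ne_of_gt hden), mul_one]
end
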